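/- Let G be a group with a finite generating set X. Then (G,X) has the asynchronous basepoint loop shortening property if and only if (G,X) has the synchronous basepoint loop shortening property. -/

import Mathlib

/-! Basic notions for a group `G` with a generating set `X`:
words over `X ∪ X⁻¹`, the word metric, paths, loops and fellow traveling. -/

namespace LoopShortening

variable {G : Type*} [Group G]

/-- `w` is a word over `X ∪ X⁻¹`: every letter of `w` lies in `X ∪ X⁻¹`. -/
def IsWord (X : Set G) (w : List G) : Prop := ∀ x ∈ w, x ∈ X ∨ x⁻¹ ∈ X

/-- The word metric with respect to `X`: `wdist X g h` is the least `n` such that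
`g⁻¹h` is a product of `n` elements of `X ∪ X⁻¹`. -/
noncomputable def wdist (X : Set G) (g h : G) : ℕ :=
  sInf {n : ℕ | ∃ l : List G, IsWord X l ∧ l.length = n ∧ g * l.prod = h}

/-- The point at time `t ∈ ℕ` along the path based at `g₀` labelled by the word `w`;
for `t ≥ |w|` this is the endpoint of the path. -/
def pathAt (g₀ : G) (w : List G) (t : ℕ) : G := g₀ * (w.take t).prod

/-- The word `w` labels a loop (its evaluation in `G` is the identity, so the
path it labels ends where it starts). -/
def IsLoop (w : List G) : Prop := w.prod = 1

/-- The paths based at `g₀` and `h₀` labelled by `w` and `u` synchronously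
`k`-fellow travel. -/
def SyncFellow (X : Set G) (k : ℕ) (g₀ : G) (w : List G) (h₀ : G) (u : List G) : Prop :=
  ∀ t : ℕ, wdist X (pathAt g₀ w t) (pathAt h₀ u t) ≤ k

/-- The paths based at `g₀` and `h₀` labelled by `w` and `u` asynchronously
`k`-fellow travel: there is a nondecreasing unbounded reparameterization `φ`. -/
def AsyncFellow (X : Set G) (k : ℕ) (g₀ : G) (w : List G) (h₀ : G) (u : List G) : Prop :=
  ∃ φ : ℕ → ℕ, Monotone φ ∧ (∀ m : ℕ, ∃ t : ℕ, m ≤ φ t) ∧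
    ∀ t : ℕ, wdist X (pathAt g₀ w t) (pathAt h₀ u (φ t)) ≤ k

/-- `(G,X)` has the synchronous basepoint loop shortening property: there is `k > 0`
such that every nonempty loop based at `g₀` is synchronously `k`-fellow traveled by a
strictly shorter loop based at the same point `g₀`. -/
def SyncBLSP (X : Set G) : Prop :=
  ∃ k : ℕ, 0 < k ∧ ∀ (g₀ : G) (w : List G), IsWord X w → IsLoop w → w ≠ [] →
    ∃ u : List G, IsWord X u ∧ IsLoop u ∧ u.length < w.length ∧
      SyncFellow X k g₀ w g₀ u

/-- `(G,X)` has the asynchronous basepoint loop shortening property. -/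
def AsyncBLSP (X : Set G) : Prop :=
  ∃ k : ℕ, 0 < k ∧ ∀ (g₀ : G) (w : List G), IsWord X w → IsLoop w → w ≠ [] →
    ∃ u : List G, IsWord X u ∧ IsLoop u ∧ u.length < w.length ∧
      AsyncFellow X k g₀ w g₀ u

section Aux

variable (X : Set G)

lemma isWord_nil : IsWord X ([] : List G) := by intro x hx; simp at hx

lemma isWord_append {l₁ l₂ : List G} (h₁ : IsWord X l₁) (h₂ : IsWord X l₂) :
    IsWord X (l₁ ++ l₂) := by
  intro x hx
  rcases List.mem_append.mp hx with h | h
  exacts [h₁ x h, h₂ x h]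

lemma isWord_of_subset {l₁ l₂ : List G} (h : ∀ x ∈ l₁, x ∈ l₂) (h₂ : IsWord X l₂) :
    IsWord X l₁ := fun x hx => h₂ x (h x hx)

lemma isWord_take {l : List G} (h : IsWord X l) (n : ℕ) : IsWord X (l.take n) :=
  isWord_of_subset X (fun _ hx => List.mem_of_mem_take hx) h

lemma wdist_le {g h : G} {m : ℕ} {l : List G} (hl : IsWord X l) (hlen : l.length = m)
    (hp : g * l.prod = h) : wdist X g h ≤ m :=
  Nat.sInf_le ⟨l, hl, hlen, hp⟩

lemma wdist_le' {g h : G} {l : List G} (hl : IsWord X l) (hp : g * l.prod = h) :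
    wdist X g h ≤ l.length := wdist_le X hl rfl hp

lemma wdist_self (g : G) : wdist X g g = 0 :=
  Nat.le_zero.mp (wdist_le X (isWord_nil X) rfl (by simp))

variable (hgen : Subgroup.closure X = ⊤)
include hgen

lemma exists_word (g h : G) : ∃ l : List G, IsWord X l ∧ g * l.prod = h := by
  have hx : g⁻¹ * h ∈ Subgroup.closure X := by rw [hgen]; trivial
  have hx2 : g⁻¹ * h ∈ Submonoid.closure (X ∪ X⁻¹) := by
    rw [← Subgroup.closure_toSubmonoid]; exact hx
  obtain ⟨l, hl, hp⟩ := Submonoid.exists_list_of_mem_closure hx2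
  refine ⟨l, fun x hx' => ?_, by rw [hp]; group⟩
  rcases hl x hx' with h' | h'
  · exact Or.inl h'
  · exact Or.inr (Set.mem_inv.mp h')

lemma wdist_spec (g h : G) :
    ∃ l : List G, IsWord X l ∧ l.length = wdist X g h ∧ g * l.prod = h := by
  have hne : {n : ℕ | ∃ l : List G, IsWord X l ∧ l.length = n ∧ g * l.prod = h}.Nonempty := by
    obtain ⟨l, hl, hp⟩ := exists_word X hgen g h
    exact ⟨l.length, l, hl, rfl, hp⟩
  exact Nat.sInf_mem hne

lemma wdist_triangle (g m h : G) : wdist X g h ≤ wdist X g m + wdist X m h := by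
  obtain ⟨l₁, hw₁, hl₁, hp₁⟩ := wdist_spec X hgen g m
  obtain ⟨l₂, hw₂, hl₂, hp₂⟩ := wdist_spec X hgen m h
  refine wdist_le X (isWord_append X hw₁ hw₂) ?_ ?_
  · simp [hl₁, hl₂]
  · rw [List.prod_append, ← mul_assoc, hp₁, hp₂]

lemma wdist_symm_le (g h : G) : wdist X h g ≤ wdist X g h := by
  obtain ⟨l, hw, hl, hp⟩ := wdist_spec X hgen g h
  refine wdist_le X (l := (l.map fun x => x⁻¹).reverse) ?_ (by simp [hl]) ?_
  · intro x hx
    simp only [List.mem_reverse, List.mem_map] at hx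
    obtain ⟨y, hy, rfl⟩ := hx
    rcases hw y hy with h' | h'
    · exact Or.inr (by simpa using h')
    · exact Or.inl h'
  · rw [← List.prod_inv_reverse, ← hp]; group

lemma wdist_symm (g h : G) : wdist X g h = wdist X h g :=
  le_antisymm (wdist_symm_le X hgen h g) (wdist_symm_le X hgen g h)

end Aux

section Path

variable (X : Set G)

lemma pathAt_zero (g₀ : G) (w : List G) : pathAt g₀ w 0 = g₀ := by simp [pathAt]

lemma pathAt_of_le (g₀ : G) (w : List G) {t : ℕ} (h : w.length ≤ t) :
    pathAt g₀ w t = g₀ * w.prod := by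
  rw [pathAt, List.take_of_length_le h]

lemma wdist_pathAt_le {w : List G} (hw : IsWord X w) (g₀ : G) {s t : ℕ} (hst : s ≤ t) :
    wdist X (pathAt g₀ w s) (pathAt g₀ w t) ≤ t - s := by
  refine le_trans (wdist_le' X (l := (w.take t).drop s) ?_ ?_) ?_
  · exact isWord_of_subset X (fun x hx => List.mem_of_mem_drop hx) (isWord_take X hw t)
  swap
  · simp only [List.length_drop, List.length_take]
    have := min_le_left t w.length
    omega
  · rw [pathAt, pathAt, mul_assoc, ← List.prod_append]
    congr 1
    conv_rhs => rw [← List.take_append_drop s (w.take t)]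
    rw [List.take_take, min_eq_left hst]

lemma wdist_pathAt_le' (hgen : Subgroup.closure X = ⊤) {w : List G} (hw : IsWord X w)
    (g₀ : G) (s t : ℕ) :
    wdist X (pathAt g₀ w s) (pathAt g₀ w t) ≤ (t - s) + (s - t) := by
  rcases le_total s t with h | h
  · calc wdist X (pathAt g₀ w s) (pathAt g₀ w t) ≤ t - s := wdist_pathAt_le X hw g₀ h
      _ ≤ _ := le_self_add
  · rw [wdist_symm X hgen]
    calc wdist X (pathAt g₀ w t) (pathAt g₀ w s) ≤ s - t := wdist_pathAt_le X hw g₀ h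
      _ ≤ _ := le_add_self

lemma wdist_chain (hgen : Subgroup.closure X = ⊤) (f : ℕ → G) :
    ∀ {A B : ℕ}, A ≤ B →
      wdist X (f A) (f B) ≤ ∑ t ∈ Finset.Ico A B, wdist X (f t) (f (t + 1)) := by
  intro A B
  induction B with
  | zero => intro h; simp [Nat.le_zero.mp h, wdist_self]
  | succ B ih =>
    intro h
    rcases Nat.lt_or_ge A (B + 1) with h' | h'
    · have hAB : A ≤ B := Nat.lt_succ_iff.mp h'
      rw [Finset.sum_Ico_succ_top hAB]
      calc wdist X (f A) (f (B + 1)) ≤ wdist X (f A) (f B) + wdist X (f B) (f (B + 1)) :=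
            wdist_triangle X hgen _ _ _
        _ ≤ _ := by gcongr; exact ih hAB
    · have : A = B + 1 := le_antisymm h h'
      simp [this, wdist_self]

end Path

section Build

variable (X : Set G) (hgen : Subgroup.closure X = ⊤) (a : G) (c₁ : ℕ) (q : ℕ → G)

/-- A padding word: `p` copies of `a·a⁻¹`. -/
def padW (a : G) : ℕ → List G
  | 0 => []
  | p + 1 => a :: a⁻¹ :: padW a p

lemma padW_prod (p : ℕ) : (padW a p).prod = 1 := by
  induction p with
  | zero => simp [padW]
  | succ p ih => simp [padW, ih]

lemma padW_length (p : ℕ) : (padW a p).length = 2 * p := by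
  induction p with
  | zero => simp [padW]
  | succ p ih => simp [padW, ih]; ring

lemma padW_isWord (ha : a ∈ X) (p : ℕ) : IsWord X (padW a p) := by
  induction p with
  | zero => exact isWord_nil X
  | succ p ih =>
    intro x hx
    rcases hx with _ | ⟨_, hx⟩
    · exact Or.inl ha
    · rcases hx with _ | ⟨_, hx⟩
      · exact Or.inr (by simpa using ha)
      · exact ih x hx

lemma padW_take_prod (p : ℕ) : ∀ m : ℕ, ((padW a p).take m).prod = 1 ∨
    ((padW a p).take m).prod = a := by
  induction p with
  | zero => intro m; left; simp [padW]
  | succ p ih =>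
    intro m
    match m with
    | 0 => left; simp
    | 1 => right; simp [padW]
    | m + 2 =>
      show ((a :: a⁻¹ :: padW a p).take (m + 2)).prod = 1 ∨ _
      rcases ih m with h | h
      · left; simp [List.take, h]
      · right; simp [padW, List.take, h]

/-- A chosen geodesic word from `g` to `h`. -/
noncomputable def geo (g h : G) : List G := (wdist_spec X hgen g h).choose

lemma geo_isWord (g h : G) : IsWord X (geo X hgen g h) :=
  (wdist_spec X hgen g h).choose_spec.1

lemma geo_length (g h : G) : (geo X hgen g h).length = wdist X g h :=
  (wdist_spec X hgen g h).choose_spec.2.1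

lemma geo_prod (g h : G) : g * (geo X hgen g h).prod = h :=
  (wdist_spec X hgen g h).choose_spec.2.2

/-- The scheduled loop word, built segment by segment with greedy padding. -/
noncomputable def bV : ℕ → List G
  | 0 => []
  | t + 1 =>
      bV t ++ geo X hgen (q t) (q (t + 1)) ++
        padW a ((t + 1 - (c₁ + (bV t).length + wdist X (q t) (q (t + 1))) + 1) / 2)

lemma bV_succ (t : ℕ) :
    bV X hgen a c₁ q (t + 1) = bV X hgen a c₁ q t ++ geo X hgen (q t) (q (t + 1)) ++
      padW a ((t + 1 - (c₁ + (bV X hgen a c₁ q t).length + wdist X (q t) (q (t + 1))) + 1) / 2) :=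
  rfl

lemma bV_isWord (ha : a ∈ X) (t : ℕ) : IsWord X (bV X hgen a c₁ q t) := by
  induction t with
  | zero => exact isWord_nil X
  | succ t ih =>
    rw [bV_succ]
    exact isWord_append X (isWord_append X ih (geo_isWord X hgen _ _)) (padW_isWord X a ha _)

lemma bV_prod (g₀ : G) (hq0 : q 0 = g₀) (t : ℕ) :
    g₀ * (bV X hgen a c₁ q t).prod = q t := by
  induction t with
  | zero => simp [bV, ← hq0]
  | succ t ih =>
    rw [bV_succ, List.prod_append, List.prod_append, padW_prod, mul_one, ← mul_assoc, ih,
      geo_prod]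

lemma bV_prefix {s t : ℕ} (hst : s ≤ t) :
    (bV X hgen a c₁ q s) <+: (bV X hgen a c₁ q t) := by
  induction t with
  | zero => rw [Nat.le_zero.mp hst]
  | succ t ih =>
    rcases Nat.lt_or_ge s (t + 1) with h | h
    · refine (ih (Nat.lt_succ_iff.mp h)).trans ?_
      rw [bV_succ, List.append_assoc]
      exact List.prefix_append _ _
    · rw [le_antisymm hst h]

lemma bV_step (t : ℕ) :
    ((bV X hgen a c₁ q (t + 1)).length =
        (bV X hgen a c₁ q t).length + wdist X (q t) (q (t + 1)) ∨
      (bV X hgen a c₁ q (t + 1)).length + c₁ ≤ t + 2) ∧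
    t + 1 ≤ (bV X hgen a c₁ q (t + 1)).length + c₁ ∧
    (bV X hgen a c₁ q t).length + wdist X (q t) (q (t + 1)) ≤
      (bV X hgen a c₁ q (t + 1)).length := by
  have hlen : (bV X hgen a c₁ q (t + 1)).length =
      (bV X hgen a c₁ q t).length + wdist X (q t) (q (t + 1)) +
        2 * ((t + 1 - (c₁ + (bV X hgen a c₁ q t).length + wdist X (q t) (q (t + 1))) + 1) / 2) := by
    rw [bV_succ, List.length_append, List.length_append, padW_length, geo_length]
  set Mt := (bV X hgen a c₁ q t).length
  set Dt := wdist X (q t) (q (t + 1))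
  set r := t + 1 - (c₁ + Mt + Dt) with hr
  have h2 := Nat.div_add_mod (r + 1) 2
  have h3 : (r + 1) % 2 < 2 := Nat.mod_lt _ (by norm_num)
  refine ⟨?_, ?_, ?_⟩ <;> omega

lemma bV_low (t : ℕ) : t ≤ (bV X hgen a c₁ q t).length + c₁ := by
  cases t with
  | zero => exact Nat.zero_le _
  | succ t => exact (bV_step X hgen a c₁ q t).2.1

lemma bV_pos_dist (g₀ : G) (hq0 : q 0 = g₀) (ha : a ∈ X) {t T' : ℕ} {v : List G}
    (hpre : (bV X hgen a c₁ q (t + 1)) <+: v)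
    (h1 : (bV X hgen a c₁ q t).length ≤ T') (h2 : T' < (bV X hgen a c₁ q (t + 1)).length) :
    wdist X (q t) (pathAt g₀ v T') ≤ wdist X (q t) (q (t + 1)) + 1 := by
  obtain ⟨rest, hrest⟩ := hpre
  set P : ℕ := (t + 1 - (c₁ + (bV X hgen a c₁ q t).length + wdist X (q t) (q (t + 1))) + 1) / 2
    with hP
  set s : List G := geo X hgen (q t) (q (t + 1)) ++ padW a P with hs
  have hsplit : bV X hgen a c₁ q (t + 1) = bV X hgen a c₁ q t ++ s := by
    rw [bV_succ, List.append_assoc]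
  have htake : v.take T' = (bV X hgen a c₁ q t) ++ s.take (T' - (bV X hgen a c₁ q t).length) := by
    rw [← hrest, List.take_append_of_le_length (le_of_lt h2), hsplit, List.take_append,
      List.take_of_length_le h1]
  have hpath : pathAt g₀ v T' =
      (q t) * (s.take (T' - (bV X hgen a c₁ q t).length)).prod := by
    rw [pathAt, htake, List.prod_append, ← mul_assoc, bV_prod X hgen a c₁ q g₀ hq0]
  set j := T' - (bV X hgen a c₁ q t).length
  rcases le_or_gt j (geo X hgen (q t) (q (t + 1))).length with hj | hj
  · -- within the geodesic part
    have : s.take j = (geo X hgen (q t) (q (t + 1))).take j := by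
      rw [hs, List.take_append_of_le_length hj]
    rw [hpath, this]
    calc wdist X (q t) ((q t) * ((geo X hgen (q t) (q (t + 1))).take j).prod)
        ≤ ((geo X hgen (q t) (q (t + 1))).take j).length :=
          wdist_le' X (isWord_take X (geo_isWord X hgen _ _) j) rfl
      _ ≤ (geo X hgen (q t) (q (t + 1))).length := by
          rw [List.length_take]; exact min_le_right _ _
      _ ≤ _ := by rw [geo_length]; exact Nat.le_succ _
  · -- within the padding part
    have : s.take j = geo X hgen (q t) (q (t + 1)) ++
        (padW a P).take (j - (geo X hgen (q t) (q (t + 1))).length) := by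
      rw [hs, List.take_append, List.take_of_length_le (le_of_lt hj)]
    rw [hpath, this, List.prod_append, ← mul_assoc, geo_prod]
    rcases padW_take_prod a P (j - (geo X hgen (q t) (q (t + 1))).length) with h | h
    · rw [h, mul_one]
      exact le_trans (wdist_le' X (geo_isWord X hgen _ _) (geo_prod X hgen _ _))
        (by rw [geo_length]; exact Nat.le_succ _)
    · rw [h]
      calc wdist X (q t) (q (t + 1) * a)
          ≤ wdist X (q t) (q (t + 1)) + wdist X (q (t + 1)) (q (t + 1) * a) :=
            wdist_triangle X hgen _ _ _
        _ ≤ wdist X (q t) (q (t + 1)) + 1 := by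
            gcongr
            exact wdist_le' X (l := [a]) (fun x hx => by
              simp at hx; subst hx; exact Or.inl ha) (by simp)

end Build

lemma sum_sub_le (f : ℕ → ℕ) (hf : Monotone f) :
    ∀ m, ∑ t ∈ Finset.range m, (f (t + 1) - f t) ≤ f m := by
  intro m
  induction m with
  | zero => simp
  | succ m ih =>
    show ∑ t ∈ Finset.range (m + 1), (f (t + 1) - f t) ≤ f (m + 1)
    rw [Finset.sum_range_succ]
    have := hf (show m ≤ m + 1 by omega)
    omega

/-- For a group `G` with finite generating set `X`, the asynchronous basepoint loop
shortening property holds if and only if the synchronous basepoint loop shortening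
property holds. -/
theorem asyncBLSP_iff_syncBLSP {G : Type*} [Group G] (X : Set G) (hfin : X.Finite)
    (hgen : Subgroup.closure X = ⊤) :
    AsyncBLSP X ↔ SyncBLSP X := by
  constructor
  · rintro ⟨k, hk, hA⟩
    by_cases hX : ∃ x, x ∈ X
    · obtain ⟨a, ha⟩ := hX
      refine ⟨8 * k + 10, by omega, fun g₀ w hw hwloop hwne => ?_⟩
      set n := w.length with hn
      have hn1 : 1 ≤ n := List.length_pos_iff.mpr hwne
      have hwn : pathAt g₀ w n = g₀ := by
        rw [pathAt_of_le g₀ w (show w.length ≤ n by omega), hwloop, mul_one]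
      obtain ⟨u₀, hu₀w, hu₀l, hu₀len, φ₀, hφm, hφu, hφd⟩ := hA g₀ w hw hwloop hwne
      obtain ⟨t₀, ht₀⟩ := hφu u₀.length
      set T := max (n + 2) t₀ with hT
      have hTn : n + 2 ≤ T := le_max_left _ _
      -- an initial feasible marker sequence coming from the asynchronous companion
      set ψ : ℕ → ℕ := fun t => if t = 0 then 0 else min (φ₀ t) u₀.length with hψ
      have hψm : Monotone ψ := by
        intro s t hst
        by_cases h1 : s = 0
        · simp [hψ, h1]
        · have h2 : t ≠ 0 := by omega
          simp only [hψ, if_neg h1, if_neg h2]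
          exact min_le_min (hφm hst) le_rfl
      have hψpath : ∀ t, 1 ≤ t → pathAt g₀ u₀ (ψ t) = pathAt g₀ u₀ (φ₀ t) := by
        intro t ht
        have h1 : ψ t = min (φ₀ t) u₀.length := by
          simp only [hψ, if_neg (show t ≠ 0 by omega)]
        rw [h1]
        rcases le_total (φ₀ t) u₀.length with h | h
        · rw [min_eq_left h]
        · rw [min_eq_right h, pathAt_of_le _ _ h, pathAt_of_le _ _ le_rfl]
      have hq₁F : pathAt g₀ u₀ (ψ 0) = g₀ ∧
          (∀ t, T ≤ t → pathAt g₀ u₀ (ψ t) = g₀) ∧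
          (∀ t, wdist X (pathAt g₀ w t) (pathAt g₀ u₀ (ψ t)) ≤ k) := by
        refine ⟨?_, fun t ht => ?_, fun t => ?_⟩
        · simp only [hψ, if_pos rfl]
          exact pathAt_zero g₀ u₀
        · have h1 : t ≠ 0 := by omega
          have h2 : u₀.length ≤ φ₀ t :=
            le_trans ht₀ (hφm (le_trans (le_max_right (n + 2) t₀) ht))
          have h3 : ψ t = u₀.length := by
            simp only [hψ, if_neg h1]; omega
          show pathAt g₀ u₀ (ψ t) = g₀
          rw [h3, pathAt_of_le _ _ le_rfl, hu₀l, mul_one]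
        · rcases Nat.eq_zero_or_pos t with rfl | ht
          · show wdist X (pathAt g₀ w 0) (pathAt g₀ u₀ (ψ 0)) ≤ k
            have h1 : ψ 0 = 0 := by simp [hψ]
            rw [h1, pathAt_zero, pathAt_zero, wdist_self]
            exact Nat.zero_le k
          · show wdist X (pathAt g₀ w t) (pathAt g₀ u₀ (ψ t)) ≤ k
            rw [hψpath t ht]
            exact hφd t
      have hq₁cost : ∑ t ∈ Finset.range T,
          wdist X (pathAt g₀ u₀ (ψ t)) (pathAt g₀ u₀ (ψ (t + 1))) ≤ n - 1 := by
        have hψT : ψ T ≤ u₀.length := by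
          simp only [hψ, if_neg (show T ≠ 0 by omega)]
          exact min_le_right _ _
        calc ∑ t ∈ Finset.range T, wdist X (pathAt g₀ u₀ (ψ t)) (pathAt g₀ u₀ (ψ (t + 1)))
            ≤ ∑ t ∈ Finset.range T, (ψ (t + 1) - ψ t) :=
              Finset.sum_le_sum (fun t _ => wdist_pathAt_le X hu₀w g₀ (hψm (Nat.le_succ t)))
          _ ≤ ψ T := sum_sub_le ψ hψm T
          _ ≤ n - 1 := by omega
      -- choose a feasible sequence of minimal total length
      have hne : {c : ℕ | ∃ f : ℕ → G,
          (f 0 = g₀ ∧ (∀ t, T ≤ t → f t = g₀) ∧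
            (∀ t, wdist X (pathAt g₀ w t) (f t) ≤ k)) ∧
          ∑ t ∈ Finset.range T, wdist X (f t) (f (t + 1)) = c}.Nonempty :=
        ⟨_, fun t => pathAt g₀ u₀ (ψ t), hq₁F, rfl⟩
      obtain ⟨q, ⟨hq0, hqT, hqk⟩, hqc⟩ := Nat.sInf_mem hne
      have hmin : ∀ f : ℕ → G, (f 0 = g₀ ∧ (∀ t, T ≤ t → f t = g₀) ∧
            (∀ t, wdist X (pathAt g₀ w t) (f t) ≤ k)) →
          ∑ t ∈ Finset.range T, wdist X (q t) (q (t + 1)) ≤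
            ∑ t ∈ Finset.range T, wdist X (f t) (f (t + 1)) := by
        intro f hf
        rw [hqc]
        exact Nat.sInf_le ⟨f, hf, rfl⟩
      clear hqc
      have htot : ∑ t ∈ Finset.range T, wdist X (q t) (q (t + 1)) ≤ n - 1 :=
        le_trans (hmin (fun t => pathAt g₀ u₀ (ψ t)) hq₁F) hq₁cost
      have hqsymm : ∀ t, wdist X (q t) (pathAt g₀ w t) ≤ k := by
        intro t
        rw [wdist_symm X hgen]
        exact hqk t
      -- the drawdown estimate coming from minimality
      have hpair : ∀ S E : ℕ, S + 2 ≤ E → E ≤ T →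
          ∑ t ∈ Finset.Ico S E, wdist X (q t) (q (t + 1)) ≤ (E - S) + 2 * k := by
        intro S E hSE hET
        set f : ℕ → G := fun t => if S < t ∧ t < E then pathAt g₀ w t else q t with hf
        have hfF : f 0 = g₀ ∧ (∀ t, T ≤ t → f t = g₀) ∧
            (∀ t, wdist X (pathAt g₀ w t) (f t) ≤ k) := by
          refine ⟨?_, fun t ht => ?_, fun t => ?_⟩
          · rw [hf]
            show (if S < 0 ∧ 0 < E then pathAt g₀ w 0 else q 0) = g₀
            rw [if_neg (show ¬(S < 0 ∧ 0 < E) by omega)]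
            exact hq0
          · rw [hf]
            show (if S < t ∧ t < E then pathAt g₀ w t else q t) = g₀
            by_cases h : S < t ∧ t < E
            · rw [if_pos h]
              rw [pathAt_of_le g₀ w (show w.length ≤ t by omega), hwloop, mul_one]
            · rw [if_neg h]
              exact hqT t ht
          · rw [hf]
            show wdist X (pathAt g₀ w t) (if S < t ∧ t < E then pathAt g₀ w t else q t) ≤ k
            by_cases h : S < t ∧ t < E
            · rw [if_pos h, wdist_self]
              exact Nat.zero_le k
            · rw [if_neg h]
              exact hqk t
        have hcc := hmin f hfF
        have hdec : ∀ g : ℕ → G, ∑ t ∈ Finset.range T, wdist X (g t) (g (t + 1)) =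
            ∑ t ∈ Finset.Ico 0 S, wdist X (g t) (g (t + 1)) +
            ∑ t ∈ Finset.Ico S E, wdist X (g t) (g (t + 1)) +
            ∑ t ∈ Finset.Ico E T, wdist X (g t) (g (t + 1)) := by
          intro g
          rw [Finset.range_eq_Ico,
            ← Finset.sum_Ico_consecutive _ (Nat.zero_le E) hET,
            ← Finset.sum_Ico_consecutive _ (Nat.zero_le S) (show S ≤ E by omega)]
        have heq1 : ∑ t ∈ Finset.Ico 0 S, wdist X (f t) (f (t + 1)) =
            ∑ t ∈ Finset.Ico 0 S, wdist X (q t) (q (t + 1)) := by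
          refine Finset.sum_congr rfl (fun t ht => ?_)
          simp only [Finset.mem_Ico] at ht
          have e1 : f t = q t := by
            simp only [hf]; rw [if_neg (show ¬(S < t ∧ t < E) by omega)]
          have e2 : f (t + 1) = q (t + 1) := by
            simp only [hf]; rw [if_neg (show ¬(S < t + 1 ∧ t + 1 < E) by omega)]
          rw [e1, e2]
        have heq3 : ∑ t ∈ Finset.Ico E T, wdist X (f t) (f (t + 1)) =
            ∑ t ∈ Finset.Ico E T, wdist X (q t) (q (t + 1)) := by
          refine Finset.sum_congr rfl (fun t ht => ?_)
          simp only [Finset.mem_Ico] at ht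
          have e1 : f t = q t := by
            simp only [hf]; rw [if_neg (show ¬(S < t ∧ t < E) by omega)]
          have e2 : f (t + 1) = q (t + 1) := by
            simp only [hf]; rw [if_neg (show ¬(S < t + 1 ∧ t + 1 < E) by omega)]
          rw [e1, e2]
        have hmid : ∑ t ∈ Finset.Ico S E, wdist X (q t) (q (t + 1)) ≤
            ∑ t ∈ Finset.Ico S E, wdist X (f t) (f (t + 1)) := by
          rw [hdec q, hdec f, heq1, heq3] at hcc
          omega
        have hterm2 : ∀ t ∈ Finset.Ico S E, wdist X (f t) (f (t + 1)) ≤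
            1 + ((if t = S then k else 0) + (if t = E - 1 then k else 0)) := by
          intro t ht
          simp only [Finset.mem_Ico] at ht
          by_cases h1 : t = S
          · subst h1
            rw [if_pos rfl, if_neg (show ¬ t = E - 1 by omega)]
            have e1 : f t = q t := by
              simp only [hf]; rw [if_neg (show ¬(t < t ∧ t < E) by omega)]
            have e2 : f (t + 1) = pathAt g₀ w (t + 1) := by
              simp only [hf]; rw [if_pos (show t < t + 1 ∧ t + 1 < E by omega)]
            rw [e1, e2]
            have h3 := wdist_triangle X hgen (q t) (pathAt g₀ w t) (pathAt g₀ w (t + 1))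
            have h4 := hqsymm t
            have h5 := wdist_pathAt_le X hw g₀ (show t ≤ t + 1 by omega)
            omega
          · by_cases h2 : t = E - 1
            · subst h2
              rw [if_neg h1, if_pos rfl]
              have e1 : f (E - 1) = pathAt g₀ w (E - 1) := by
                simp only [hf]; rw [if_pos (show S < E - 1 ∧ E - 1 < E by omega)]
              have e2 : f (E - 1 + 1) = q (E - 1 + 1) := by
                simp only [hf]; rw [if_neg (show ¬(S < E - 1 + 1 ∧ E - 1 + 1 < E) by omega)]
              rw [e1, e2]
              have h3 := wdist_triangle X hgen (pathAt g₀ w (E - 1))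
                (pathAt g₀ w (E - 1 + 1)) (q (E - 1 + 1))
              have h4 := hqk (E - 1 + 1)
              have h5 := wdist_pathAt_le X hw g₀ (show E - 1 ≤ E - 1 + 1 by omega)
              omega
            · rw [if_neg h1, if_neg h2]
              have e1 : f t = pathAt g₀ w t := by
                simp only [hf]; rw [if_pos (show S < t ∧ t < E by omega)]
              have e2 : f (t + 1) = pathAt g₀ w (t + 1) := by
                simp only [hf]; rw [if_pos (show S < t + 1 ∧ t + 1 < E by omega)]
              rw [e1, e2]
              have h5 := wdist_pathAt_le X hw g₀ (show t ≤ t + 1 by omega)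
              omega
        have hSmem : S ∈ Finset.Ico S E := Finset.mem_Ico.mpr ⟨le_rfl, by omega⟩
        have hEmem : E - 1 ∈ Finset.Ico S E := Finset.mem_Ico.mpr ⟨by omega, by omega⟩
        calc ∑ t ∈ Finset.Ico S E, wdist X (q t) (q (t + 1))
            ≤ ∑ t ∈ Finset.Ico S E, wdist X (f t) (f (t + 1)) := hmid
          _ ≤ ∑ t ∈ Finset.Ico S E,
              (1 + ((if t = S then k else 0) + (if t = E - 1 then k else 0))) :=
              Finset.sum_le_sum hterm2
          _ = (E - S) + (k + k) := by
              rw [Finset.sum_add_distrib, Finset.sum_add_distrib, Finset.sum_const,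
                Finset.sum_ite_eq' _ S (fun _ => k), Finset.sum_ite_eq' _ (E - 1) (fun _ => k),
                if_pos hSmem, if_pos hEmem, Nat.card_Ico, smul_eq_mul, mul_one]
          _ ≤ (E - S) + 2 * k := by omega
      have hDb : ∀ t, t ≤ n → wdist X (q t) (q (t + 1)) ≤ 2 * k + 2 := by
        intro t ht
        have h1 := hpair t (t + 2) le_rfl (by omega)
        have h2 : ∑ j ∈ Finset.Ico t (t + 2), wdist X (q j) (q (j + 1)) =
            wdist X (q t) (q (t + 1)) + wdist X (q (t + 1)) (q (t + 1 + 1)) := by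
          rw [show t + 2 = (t + 1) + 1 by omega, Finset.sum_Ico_succ_top (by omega),
            Finset.sum_Ico_succ_top (by omega), Finset.Ico_self, Finset.sum_empty]
          omega
        omega
      have hdraw : ∀ S E : ℕ, S ≤ E → E ≤ n + 1 →
          ∑ t ∈ Finset.Ico S E, wdist X (q t) (q (t + 1)) ≤ (E - S) + (2 * k + 2) := by
        intro S E hSE hE
        rcases Nat.lt_or_ge E (S + 2) with h | h
        · rcases Nat.lt_or_ge E (S + 1) with h' | h'
          · have : E = S := by omega
            subst this
            rw [Finset.Ico_self, Finset.sum_empty]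
            omega
          · have hE1 : E = S + 1 := by omega
            subst hE1
            rw [Finset.sum_Ico_succ_top (by omega), Finset.Ico_self, Finset.sum_empty]
            have := hDb S (by omega)
            omega
        · have := hpair S E h (by omega)
          omega
      -- the scheduled loop
      have hstep := fun t => bV_step X hgen a (3 * k + 4) q t
      have hlow := fun t => bV_low X hgen a (3 * k + 4) q t
      have hM0 : (bV X hgen a (3 * k + 4) q 0).length = 0 := rfl
      have hclaim : ∀ t, t ≤ n →
          (bV X hgen a (3 * k + 4) q t).length ≤
            ∑ j ∈ Finset.Ico 0 t, wdist X (q j) (q (j + 1)) ∨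
          ∃ s, 1 ≤ s ∧ s ≤ t ∧ (bV X hgen a (3 * k + 4) q s).length + (3 * k + 4) ≤ s + 1 ∧
            (bV X hgen a (3 * k + 4) q t).length ≤ (bV X hgen a (3 * k + 4) q s).length +
              ∑ j ∈ Finset.Ico s t, wdist X (q j) (q (j + 1)) := by
        intro t
        induction t with
        | zero => intro _; left; rw [hM0]; exact Nat.zero_le _
        | succ t ih =>
          intro ht
          rcases (hstep t).1 with he | hp
          · rcases ih (by omega) with h | ⟨s, hs1, hs2, hs3, hs4⟩
            · left
              rw [Finset.sum_Ico_succ_top (Nat.zero_le t)]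
              omega
            · right
              refine ⟨s, hs1, by omega, hs3, ?_⟩
              rw [Finset.sum_Ico_succ_top hs2]
              omega
          · right
            refine ⟨t + 1, by omega, le_rfl, by omega, ?_⟩
            rw [Finset.Ico_self, Finset.sum_empty]
            omega
      have hup : ∀ t, t ≤ n → (bV X hgen a (3 * k + 4) q t).length ≤ t + (2 * k + 2) ∧
          ((bV X hgen a (3 * k + 4) q t).length ≤
              ∑ j ∈ Finset.Ico 0 t, wdist X (q j) (q (j + 1)) ∨
            (bV X hgen a (3 * k + 4) q t).length + (3 * k + 4) ≤ t + 1 + (2 * k + 2)) := by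
        intro t ht
        rcases hclaim t ht with h | ⟨s, hs1, hs2, hs3, hs4⟩
        · have hs := hdraw 0 t (Nat.zero_le t) (by omega)
          exact ⟨by omega, Or.inl h⟩
        · have hs := hdraw s t hs2 (by omega)
          exact ⟨by omega, Or.inr (by omega)⟩
      have hqnk : wdist X (q n) g₀ ≤ k := by
        have h1 := hqk n
        rw [hwn] at h1
        rw [wdist_symm X hgen]
        exact h1
      have hqTg : q T = g₀ := hqT T le_rfl
      have hFsum : wdist X (q n) g₀ ≤ ∑ j ∈ Finset.Ico n T, wdist X (q j) (q (j + 1)) := by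
        have h1 := wdist_chain X hgen q (show n ≤ T by omega)
        rw [hqTg] at h1
        exact h1
      have hcostsplit : ∑ j ∈ Finset.range T, wdist X (q j) (q (j + 1)) =
          ∑ j ∈ Finset.Ico 0 n, wdist X (q j) (q (j + 1)) +
          ∑ j ∈ Finset.Ico n T, wdist X (q j) (q (j + 1)) := by
        rw [Finset.range_eq_Ico,
          ← Finset.sum_Ico_consecutive _ (Nat.zero_le n) (show n ≤ T by omega)]
      have hvlen : (bV X hgen a (3 * k + 4) q n ++ geo X hgen (q n) g₀).length =
          (bV X hgen a (3 * k + 4) q n).length + wdist X (q n) g₀ := by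
        rw [List.length_append, geo_length]
      have hvlen' : (bV X hgen a (3 * k + 4) q n ++ geo X hgen (q n) g₀).length ≤ n - 1 := by
        rcases (hup n le_rfl).2 with h | h <;> omega
      have hvword : IsWord X (bV X hgen a (3 * k + 4) q n ++ geo X hgen (q n) g₀) :=
        isWord_append X (bV_isWord X hgen a (3 * k + 4) q ha n) (geo_isWord X hgen _ _)
      have hvend : g₀ * (bV X hgen a (3 * k + 4) q n ++ geo X hgen (q n) g₀).prod = g₀ := by
        rw [List.prod_append, ← mul_assoc, bV_prod X hgen a (3 * k + 4) q g₀ hq0, geo_prod]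
      have hvloop : IsLoop (bV X hgen a (3 * k + 4) q n ++ geo X hgen (q n) g₀) :=
        mul_left_cancel (a := g₀) (by rw [hvend, mul_one])
      refine ⟨bV X hgen a (3 * k + 4) q n ++ geo X hgen (q n) g₀, hvword, hvloop,
        by omega, ?_⟩
      intro T'
      by_cases hT1 : T' < (bV X hgen a (3 * k + 4) q n).length
      · have hfind : ∀ m, T' < (bV X hgen a (3 * k + 4) q m).length →
            ∃ t, t < m ∧ (bV X hgen a (3 * k + 4) q t).length ≤ T' ∧
              T' < (bV X hgen a (3 * k + 4) q (t + 1)).length := by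
          intro m
          induction m with
          | zero => intro h; rw [hM0] at h; omega
          | succ m ih =>
            intro h
            by_cases h' : T' < (bV X hgen a (3 * k + 4) q m).length
            · obtain ⟨t, h1, h2, h3⟩ := ih h'
              exact ⟨t, by omega, h2, h3⟩
            · exact ⟨m, by omega, by omega, h⟩
        obtain ⟨t, htn, hMt, hMt1⟩ := hfind n hT1
        have hpre : bV X hgen a (3 * k + 4) q (t + 1) <+:
            bV X hgen a (3 * k + 4) q n ++ geo X hgen (q n) g₀ :=
          (bV_prefix X hgen a (3 * k + 4) q (show t + 1 ≤ n by omega)).trans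
            (List.prefix_append _ _)
        have hpos := bV_pos_dist X hgen a (3 * k + 4) q g₀ hq0 ha hpre hMt hMt1
        have hDt : wdist X (q t) (q (t + 1)) ≤ 2 * k + 2 := hDb t (by omega)
        have ht1 := hlow t
        have ht2 := (hup (t + 1) (by omega)).1
        have htr1 := wdist_triangle X hgen (pathAt g₀ w T') (pathAt g₀ w t)
          (pathAt g₀ (bV X hgen a (3 * k + 4) q n ++ geo X hgen (q n) g₀) T')
        have htr2 := wdist_triangle X hgen (pathAt g₀ w t) (q t)
          (pathAt g₀ (bV X hgen a (3 * k + 4) q n ++ geo X hgen (q n) g₀) T')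
        have hww := wdist_pathAt_le' X hgen hw g₀ T' t
        have hqkt := hqk t
        omega
      · by_cases hT2 : T' < (bV X hgen a (3 * k + 4) q n ++ geo X hgen (q n) g₀).length
        · have htake : (bV X hgen a (3 * k + 4) q n ++ geo X hgen (q n) g₀).take T' =
              bV X hgen a (3 * k + 4) q n ++
                (geo X hgen (q n) g₀).take (T' - (bV X hgen a (3 * k + 4) q n).length) := by
            rw [List.take_append, List.take_of_length_le (le_of_not_gt hT1)]
          have hpos2 : wdist X (q n)
              (pathAt g₀ (bV X hgen a (3 * k + 4) q n ++ geo X hgen (q n) g₀) T') ≤ k := by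
            have hpath : pathAt g₀ (bV X hgen a (3 * k + 4) q n ++ geo X hgen (q n) g₀) T' =
                q n * ((geo X hgen (q n) g₀).take
                  (T' - (bV X hgen a (3 * k + 4) q n).length)).prod := by
              rw [pathAt, htake, List.prod_append, ← mul_assoc,
                bV_prod X hgen a (3 * k + 4) q g₀ hq0]
            rw [hpath]
            calc wdist X (q n) (q n * ((geo X hgen (q n) g₀).take
                  (T' - (bV X hgen a (3 * k + 4) q n).length)).prod)
                ≤ ((geo X hgen (q n) g₀).take
                  (T' - (bV X hgen a (3 * k + 4) q n).length)).length :=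
                  wdist_le' X (isWord_take X (geo_isWord X hgen _ _) _) rfl
              _ ≤ (geo X hgen (q n) g₀).length := by
                  rw [List.length_take]; exact min_le_right _ _
              _ ≤ k := by rw [geo_length]; exact hqnk
          have hnT' := hlow n
          have htr1 := wdist_triangle X hgen (pathAt g₀ w T') (pathAt g₀ w n)
            (pathAt g₀ (bV X hgen a (3 * k + 4) q n ++ geo X hgen (q n) g₀) T')
          have htr2 := wdist_triangle X hgen (pathAt g₀ w n) (q n)
            (pathAt g₀ (bV X hgen a (3 * k + 4) q n ++ geo X hgen (q n) g₀) T')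
          have hT'n : T' < n := by omega
          have hww := wdist_pathAt_le X hw g₀ (le_of_lt hT'n)
          have hqkn := hqk n
          omega
        · have hvT' : pathAt g₀ (bV X hgen a (3 * k + 4) q n ++ geo X hgen (q n) g₀) T' = g₀ := by
            rw [pathAt_of_le g₀ _ (le_of_not_gt hT2),
              show (bV X hgen a (3 * k + 4) q n ++ geo X hgen (q n) g₀).prod = 1 from hvloop,
              mul_one]
          rw [hvT']
          by_cases hT3 : T' ≤ n
          · have h1 := wdist_pathAt_le X hw g₀ (show T' ≤ n by omega)
            rw [hwn] at h1
            have h2 := hlow n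
            omega
          · have h3 : pathAt g₀ w T' = g₀ := by
              rw [pathAt_of_le g₀ w (show w.length ≤ T' by omega), hwloop, mul_one]
            rw [h3, wdist_self]
            exact Nat.zero_le _
    · have hX1 : ∀ g : G, g = 1 := by
        intro g
        have hg : g ∈ Subgroup.closure X := by rw [hgen]; trivial
        have hXe : X = ∅ := Set.eq_empty_iff_forall_notMem.mpr (fun x hx => hX ⟨x, hx⟩)
        rw [hXe, Subgroup.closure_empty] at hg
        exact Subgroup.mem_bot.mp hg
      refine ⟨1, one_pos, fun g₀ w hw hwloop hwne =>
        ⟨[], isWord_nil X, by simp [IsLoop], List.length_pos_iff.mpr hwne, fun t => ?_⟩⟩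
      have h1 : pathAt g₀ w t = pathAt g₀ [] t := by
        unfold pathAt
        rw [hX1 (w.take t).prod, hX1 (([] : List G).take t).prod]
      rw [h1, wdist_self]
      exact Nat.zero_le 1
  · rintro ⟨k, hk, hS⟩
    refine ⟨k, hk, fun g₀ w hw hl hne => ?_⟩
    obtain ⟨u, h1, h2, h3, h4⟩ := hS g₀ w hw hl hne
    exact ⟨u, h1, h2, h3, id, monotone_id, fun m => ⟨m, le_rfl⟩, fun t => h4 t⟩


end LoopShortening
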